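/- The discrete-time Laguerre basis vectors are orthonormal: for the Laguerre functions l_ρ defined by L_0 = √(1-α²)·[1, -α, α², ..., (-α)^{M-1}]ᵀ and L_{i+1} = A_L L_i with the given lower-triangular matrix A_L, the infinite sums satisfy ∑_{i=0}^∞ l_ρ(i)·l_σ(i) = 1 if ρ = σ and 0 otherwise, for any pole α with 0 ≤ α < 1. -/

import Mathlib

noncomputable def AL (M : ℕ) (α : ℝ) : Matrix (Fin M) (Fin M) ℝ :=
  Matrix.of fun j k =>
    if (j : ℕ) = k then α
    else if (k : ℕ) < j then (-α) ^ ((j : ℕ) - k - 1) * (1 - α ^ 2)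
    else 0

noncomputable def LagL0 (M : ℕ) (α : ℝ) : Fin M → ℝ :=
  fun ρ => Real.sqrt (1 - α ^ 2) * (-α) ^ (ρ : ℕ)

noncomputable def Lag (M : ℕ) (α : ℝ) : ℕ → Fin M → ℝ
  | 0 => LagL0 M α
  | i + 1 => (AL M α).mulVec (Lag M α i)

open Finset Matrix Filter

namespace LagAux

/-- Entry function of `AL` over natural indices. -/
def a (α : ℝ) (j k : ℕ) : ℝ :=
  if j = k then α else if k < j then (-α) ^ (j - k - 1) * (1 - α ^ 2) else 0

lemma AL_apply (M : ℕ) (α : ℝ) (j k : Fin M) : AL M α j k = a α j k := rfl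

lemma geo (α : ℝ) (k : ℕ) : (1 - α ^ 2) * ∑ t ∈ range k, (α ^ 2) ^ t = 1 - (α ^ 2) ^ k := by
  have h := geom_sum_mul (α ^ 2) k
  linear_combination -h

lemma keyNat (α : ℝ) {j k MM : ℕ} (hk : k ≤ j) (hj : j < MM) :
    ∑ l ∈ range MM, a α j l * a α k l
      = (if j = k then 1 else 0) - (1 - α ^ 2) * ((-α) ^ j * (-α) ^ k) := by
  have hsub : ∑ l ∈ range MM, a α j l * a α k l = ∑ l ∈ range (k + 1), a α j l * a α k l := by
    refine (Finset.sum_subset (range_subset_range.2 (by omega)) ?_).symm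
    intro l hl hnl
    have hlk : k < l := by
      simp only [mem_range] at hl hnl; omega
    have h0 : a α k l = 0 := by
      unfold a
      rw [if_neg (by omega), if_neg (by omega)]
    rw [h0, mul_zero]
  have hakk : a α k k = α := by simp [a]
  have hrest : ∑ l ∈ range k, a α j l * a α k l
      = (-α) ^ (j - k) * (1 - α ^ 2) ^ 2 * ∑ t ∈ range k, (α ^ 2) ^ t := by
    have h1 : ∀ l ∈ range k, a α j l * a α k l
        = (-α) ^ (j - k) * (1 - α ^ 2) ^ 2 * (α ^ 2) ^ (k - 1 - l) := by
      intro l hl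
      have hlk : l < k := mem_range.mp hl
      have haj : a α j l = (-α) ^ (j - l - 1) * (1 - α ^ 2) := by
        unfold a; rw [if_neg (by omega), if_pos (by omega)]
      have hak : a α k l = (-α) ^ (k - l - 1) * (1 - α ^ 2) := by
        unfold a; rw [if_neg (by omega), if_pos (by omega)]
      have he : j - l - 1 = (j - k) + (k - l - 1) := by omega
      have he2 : k - 1 - l = k - l - 1 := by omega
      have hPP : (-α) ^ (k - l - 1) * (-α) ^ (k - l - 1) = (α ^ 2) ^ (k - l - 1) := by
        rw [← mul_pow]; ring
      rw [haj, hak, he, pow_add, he2]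
      linear_combination ((-α) ^ (j - k) * (1 - α ^ 2) ^ 2) * hPP
    rw [Finset.sum_congr rfl h1, ← Finset.mul_sum]
    congr 1
    exact Finset.sum_range_reflect (fun t => (α ^ 2) ^ t) k
  have hS := geo α k
  have hkk : (-α) ^ k * (-α) ^ k = (α ^ 2) ^ k := by
    rw [← mul_pow]; ring
  rcases eq_or_lt_of_le hk with rfl | hlt
  · rw [hsub, Finset.sum_range_succ, hakk, hrest, if_pos rfl, Nat.sub_self, pow_zero, hkk]
    linear_combination (1 - α ^ 2) * hS
  · have hajk : a α j k = (-α) ^ (j - k - 1) * (1 - α ^ 2) := by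
      unfold a; rw [if_neg (by omega), if_pos (by omega)]
    have hj1 : (-α) ^ (j - k) = (-α) ^ (j - k - 1) * (-α) := by
      rw [← pow_succ]; congr 1; omega
    have hj2 : (-α) ^ j = (-α) ^ (j - k - 1) * (-α) * (-α) ^ k := by
      rw [mul_assoc, ← pow_succ', ← pow_add]; congr 1; omega
    have hjj : (-α) ^ j * (-α) ^ k = (-α) ^ (j - k - 1) * (-α) * (α ^ 2) ^ k := by
      rw [hj2, mul_assoc, hkk]
    rw [hsub, Finset.sum_range_succ, hakk, hrest, hajk, if_neg (by omega), hj1, hjj]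
    linear_combination ((-α) ^ (j - k - 1) * (-α) * (1 - α ^ 2)) * hS

lemma sumFin (M : ℕ) (α : ℝ) (j k : Fin M) :
    ∑ l : Fin M, AL M α j l * AL M α k l = ∑ l ∈ range M, a α j l * a α k l :=
  Fin.sum_univ_eq_sum_range (fun l => a α (j : ℕ) l * a α (k : ℕ) l) M

lemma key (M : ℕ) (α : ℝ) (hα1 : α < 1) (hα0 : 0 ≤ α) :
    AL M α * (AL M α)ᵀ = 1 - vecMulVec (LagL0 M α) (LagL0 M α) := by
  ext j k
  have hβ : (0:ℝ) ≤ 1 - α ^ 2 := by nlinarith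
  have hs : Real.sqrt (1 - α ^ 2) * Real.sqrt (1 - α ^ 2) = 1 - α ^ 2 :=
    Real.mul_self_sqrt hβ
  simp only [Matrix.mul_apply, transpose_apply, Matrix.sub_apply, Matrix.one_apply,
    vecMulVec_apply, LagL0]
  have hjk : (j = k) ↔ ((j : ℕ) = (k : ℕ)) := Fin.ext_iff
  rcases le_total (k : ℕ) (j : ℕ) with h | h
  · rw [sumFin M α j k, keyNat α h j.isLt]
    by_cases hc : (j : ℕ) = (k : ℕ)
    · rw [if_pos hc, if_pos (hjk.mpr hc)]; linear_combination ((-α) ^ (j:ℕ) * (-α) ^ (k:ℕ)) * hs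
    · rw [if_neg hc, if_neg (fun hh => hc (hjk.mp hh))]
      linear_combination ((-α) ^ (j:ℕ) * (-α) ^ (k:ℕ)) * hs
  · have hcomm : ∑ l : Fin M, AL M α j l * AL M α k l
        = ∑ l ∈ range M, a α k l * a α j l := by
      rw [← sumFin M α k j]
      exact Finset.sum_congr rfl fun l _ => mul_comm _ _
    rw [hcomm, keyNat α h k.isLt]
    by_cases hc : (j : ℕ) = (k : ℕ)
    · rw [if_pos hc.symm, if_pos (hjk.mpr hc)]
      linear_combination ((-α) ^ (j:ℕ) * (-α) ^ (k:ℕ)) * hs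
    · rw [if_neg (fun hh => hc hh.symm), if_neg (fun hh => hc (hjk.mp hh))]
      linear_combination ((-α) ^ (j:ℕ) * (-α) ^ (k:ℕ)) * hs

lemma lag_eq (M : ℕ) (α : ℝ) (i : ℕ) :
    Lag M α i = ((AL M α) ^ i).mulVec (LagL0 M α) := by
  induction i with
  | zero => rw [pow_zero]; simp [Lag]
  | succ n ih =>
    show (AL M α).mulVec (Lag M α n) = _
    rw [ih, Matrix.mulVec_mulVec, ← pow_succ']

lemma vmv_mulVec {M : ℕ} (B : Matrix (Fin M) (Fin M) ℝ) (v : Fin M → ℝ) :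
    vecMulVec (B.mulVec v) (B.mulVec v) = B * vecMulVec v v * Bᵀ := by
  ext j k
  simp only [vecMulVec_apply, Matrix.mulVec, Matrix.mul_apply, transpose_apply,
    dotProduct]
  rw [Finset.sum_mul_sum, Finset.sum_comm]
  refine Finset.sum_congr rfl fun m _ => ?_
  rw [Finset.sum_mul]
  exact Finset.sum_congr rfl fun l _ => by ring

lemma partialSum (M : ℕ) (α : ℝ) (hα1 : α < 1) (hα0 : 0 ≤ α) (N : ℕ) :
    ∑ i ∈ range N, vecMulVec (Lag M α i) (Lag M α i)
      = 1 - (AL M α) ^ N * ((AL M α) ^ N)ᵀ := by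
  induction N with
  | zero => simp
  | succ n ih =>
    rw [Finset.sum_range_succ, ih, lag_eq, vmv_mulVec, pow_succ, Matrix.transpose_mul,
      show (AL M α) ^ n * AL M α * ((AL M α)ᵀ * ((AL M α) ^ n)ᵀ)
        = (AL M α) ^ n * (AL M α * (AL M α)ᵀ) * ((AL M α) ^ n)ᵀ by
          rw [Matrix.mul_assoc, Matrix.mul_assoc, Matrix.mul_assoc],
      key M α hα1 hα0]
    rw [Matrix.mul_sub, Matrix.mul_one, Matrix.sub_mul]
    abel

lemma decay (M : ℕ) (α : ℝ) (hM : 1 ≤ M) (hα0 : 0 ≤ α) (hα1 : α < 1) :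
    ∃ C : ℝ, 0 ≤ C ∧ ∃ q : ℝ, 0 ≤ q ∧ q < 1 ∧
      ∀ (N : ℕ) (j k : Fin M), |((AL M α) ^ N) j k| ≤ C * q ^ N := by
  set β : ℝ := 1 - α ^ 2 with hβdef
  have hβ : 0 < β := by nlinarith
  have hM0 : (0:ℝ) < M := by exact_mod_cast hM
  set ε : ℝ := min 1 ((1 - α) / (2 * M * β)) with hεdef
  have hε0 : 0 < ε := lt_min one_pos (div_pos (by linarith) (by positivity))
  have hε1 : ε ≤ 1 := min_le_left _ _
  have hδ1 : 1 ≤ 1 / ε := by rw [le_div_iff₀ hε0]; linarith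
  set q : ℝ := (1 + α) / 2 with hqdef
  have hq0 : 0 ≤ q := by positivity
  have hq1 : q < 1 := by rw [hqdef]; linarith
  have hMε : (M:ℝ) * β * ε ≤ (1 - α) / 2 := by
    have h1 : ε ≤ (1 - α) / (2 * M * β) := min_le_right _ _
    have h2 : (M:ℝ) * β * ((1 - α) / (2 * M * β)) = (1 - α) / 2 := by
      field_simp
    calc (M:ℝ) * β * ε ≤ (M:ℝ) * β * ((1 - α) / (2 * M * β)) := by
          apply mul_le_mul_of_nonneg_left h1 (by positivity)
      _ = (1 - α) / 2 := h2
  clear_value β ε q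
  -- main induction
  have main : ∀ (N : ℕ) (j k : Fin M),
      |((AL M α) ^ N) j k| ≤ ε ^ (k : ℕ) * (1 / ε) ^ (j : ℕ) * q ^ N := by
    intro N
    induction N with
    | zero =>
      intro j k
      rw [pow_zero, pow_zero, mul_one, Matrix.one_apply]
      by_cases h : j = k
      · subst h
        rw [if_pos rfl, abs_one, ← mul_pow, mul_one_div_cancel (ne_of_gt hε0), one_pow]
      · rw [if_neg h, abs_zero]; positivity
    | succ n ih =>
      intro j k
      rw [pow_succ']
      rw [Matrix.mul_apply]
      calc |∑ l : Fin M, AL M α j l * ((AL M α) ^ n) l k|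
          ≤ ∑ l : Fin M, |AL M α j l * ((AL M α) ^ n) l k| := Finset.abs_sum_le_sum_abs _ _
        _ ≤ ∑ l : Fin M, (if l = j then α else β * ε) * (1 / ε) ^ (j : ℕ)
              * (ε ^ (k : ℕ) * q ^ n) := by
            apply Finset.sum_le_sum
            intro l _
            rw [abs_mul]
            have hb : |AL M α j l| * |((AL M α) ^ n) l k|
                ≤ |AL M α j l| * (ε ^ (k : ℕ) * (1 / ε) ^ (l : ℕ) * q ^ n) :=
              mul_le_mul_of_nonneg_left (ih l k) (abs_nonneg _)
            refine hb.trans ?_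
            have hstep : |AL M α j l| * (1 / ε) ^ (l : ℕ)
                ≤ (if l = j then α else β * ε) * (1 / ε) ^ (j : ℕ) := by
              by_cases hlj : l = j
              · subst hlj
                rw [if_pos rfl, AL_apply]
                unfold a
                rw [if_pos rfl, abs_of_nonneg hα0]
              · rw [if_neg hlj, AL_apply]
                unfold a
                rw [if_neg (fun hh => hlj (Fin.ext hh.symm))]
                by_cases hlt : (l : ℕ) < (j : ℕ)
                · rw [if_pos hlt, abs_mul, abs_pow, abs_neg, abs_of_nonneg hα0,
                    abs_of_nonneg (show (0:ℝ) ≤ 1 - α ^ 2 by nlinarith), ← hβdef]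
                  have hsplit : (1 / ε) ^ (j : ℕ)
                      = (1 / ε) ^ ((j : ℕ) - (l : ℕ) - 1) * (1 / ε) * (1 / ε) ^ (l : ℕ) := by
                    rw [mul_assoc, ← pow_succ', ← pow_add]
                    congr 1; omega
                  rw [hsplit]
                  have h1ε : ε * (1 / ε) = 1 := mul_one_div_cancel (ne_of_gt hε0)
                  have hpow : α ^ ((j : ℕ) - (l : ℕ) - 1)
                      ≤ (1 / ε) ^ ((j : ℕ) - (l : ℕ) - 1) := by
                    apply pow_le_pow_left₀ hα0 (le_trans (le_of_lt hα1) hδ1)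
                  calc α ^ ((j:ℕ)-(l:ℕ)-1) * β * (1/ε) ^ (l:ℕ)
                      ≤ (1/ε) ^ ((j:ℕ)-(l:ℕ)-1) * β * (1/ε) ^ (l:ℕ) := by
                        apply mul_le_mul_of_nonneg_right
                          (mul_le_mul_of_nonneg_right hpow (le_of_lt hβ)) (by positivity)
                    _ = β * ε * ((1/ε) ^ ((j:ℕ)-(l:ℕ)-1) * (1/ε) * (1/ε) ^ (l:ℕ)) := by
                        field_simp
                  done
                · rw [if_neg hlt, abs_zero, zero_mul]; positivity
            calc |AL M α j l| * (ε ^ (k:ℕ) * (1/ε) ^ (l:ℕ) * q ^ n)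
                = |AL M α j l| * (1/ε) ^ (l:ℕ) * (ε ^ (k:ℕ) * q ^ n) := by ring
              _ ≤ (if l = j then α else β * ε) * (1/ε) ^ (j:ℕ) * (ε ^ (k:ℕ) * q ^ n) := by
                  apply mul_le_mul_of_nonneg_right hstep (by positivity)
        _ = (∑ l : Fin M, (if l = j then α else β * ε))
              * ((1 / ε) ^ (j : ℕ) * (ε ^ (k : ℕ) * q ^ n)) := by
            rw [Finset.sum_mul]; exact Finset.sum_congr rfl fun l _ => by ring
        _ ≤ q * ((1 / ε) ^ (j : ℕ) * (ε ^ (k : ℕ) * q ^ n)) := by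
            apply mul_le_mul_of_nonneg_right _ (by positivity)
            have hsum : ∑ l : Fin M, (if l = j then α else β * ε)
                = α - β * ε + M * (β * ε) := by
              have : ∀ l : Fin M, (if l = j then α else β * ε)
                  = (if j = l then α - β * ε else 0) + β * ε := by
                intro l
                by_cases h : l = j
                · subst h; rw [if_pos rfl, if_pos rfl]; ring
                · rw [if_neg h, if_neg (fun hh => h hh.symm), zero_add]
              rw [Finset.sum_congr rfl (fun l _ => this l), Finset.sum_add_distrib,
                Finset.sum_ite_eq, if_pos (Finset.mem_univ j)]
              simp [Finset.card_univ]
            rw [hsum, hqdef]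
            have hr : (M:ℝ) * (β * ε) = M * β * ε := by ring
            have hβε : (0:ℝ) ≤ β * ε := by positivity
            linarith [hMε]
        _ = ε ^ (k : ℕ) * (1 / ε) ^ (j : ℕ) * q ^ (n + 1) := by ring
  refine ⟨(1 / ε) ^ M, by positivity, q, hq0, hq1, ?_⟩
  intro N j k
  refine (main N j k).trans ?_
  apply mul_le_mul_of_nonneg_right _ (by positivity)
  calc ε ^ (k : ℕ) * (1 / ε) ^ (j : ℕ)
      ≤ 1 * (1 / ε) ^ (j : ℕ) := by
        apply mul_le_mul_of_nonneg_right (pow_le_one₀ (le_of_lt hε0) hε1) (by positivity)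
    _ = (1 / ε) ^ (j : ℕ) := one_mul _
    _ ≤ (1 / ε) ^ M := pow_le_pow_right₀ hδ1 (le_of_lt j.isLt)

end LagAux

/-- Orthonormality of the discrete-time Laguerre basis vectors. -/
theorem laguerre_orthonormal (M : ℕ) (hM : 1 ≤ M) (α : ℝ) (hα0 : 0 ≤ α) (hα1 : α < 1)
    (ρ σ : Fin M) :
    ∑' i : ℕ, Lag M α i ρ * Lag M α i σ = if ρ = σ then 1 else 0 := by
  obtain ⟨C, hC0, q, hq0, hq1, hbound⟩ := LagAux.decay M α hM hα0 hα1
  set C' : ℝ := C * ∑ k : Fin M, |LagL0 M α k| with hC'def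
  have hC'0 : 0 ≤ C' := by
    apply mul_nonneg hC0
    exact Finset.sum_nonneg fun k _ => abs_nonneg _
  have hLag : ∀ (i : ℕ) (τ : Fin M), |Lag M α i τ| ≤ C' * q ^ i := by
    intro i τ
    rw [LagAux.lag_eq]
    calc |((AL M α) ^ i).mulVec (LagL0 M α) τ|
        = |∑ k : Fin M, ((AL M α) ^ i) τ k * LagL0 M α k| := rfl
      _ ≤ ∑ k : Fin M, |((AL M α) ^ i) τ k * LagL0 M α k| := Finset.abs_sum_le_sum_abs _ _
      _ ≤ ∑ k : Fin M, C * q ^ i * |LagL0 M α k| := by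
          apply Finset.sum_le_sum
          intro k _
          rw [abs_mul]
          exact mul_le_mul_of_nonneg_right (hbound i τ k) (abs_nonneg _)
      _ = C' * q ^ i := by rw [hC'def, ← Finset.mul_sum]; ring
  have hqq : q * q < 1 := by nlinarith
  have hsum : Summable (fun i : ℕ => Lag M α i ρ * Lag M α i σ) := by
    apply Summable.of_norm_bounded (g := fun i => C' * C' * (q * q) ^ i)
    · exact (summable_geometric_of_lt_one (by positivity) hqq).mul_left _
    · intro i
      rw [Real.norm_eq_abs, abs_mul, mul_pow]
      calc |Lag M α i ρ| * |Lag M α i σ|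
          ≤ (C' * q ^ i) * (C' * q ^ i) :=
            mul_le_mul (hLag i ρ) (hLag i σ) (abs_nonneg _) (by positivity)
        _ = C' * C' * (q ^ i * q ^ i) := by ring
  have h1 : Tendsto (fun N => ∑ i ∈ Finset.range N, Lag M α i ρ * Lag M α i σ) atTop
      (nhds (∑' i : ℕ, Lag M α i ρ * Lag M α i σ)) := hsum.hasSum.tendsto_sum_nat
  have hps : ∀ N, ∑ i ∈ Finset.range N, Lag M α i ρ * Lag M α i σ
      = (if ρ = σ then 1 else 0)
        - ∑ k : Fin M, ((AL M α) ^ N) ρ k * ((AL M α) ^ N) σ k := by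
    intro N
    have := congrArg (fun A : Matrix (Fin M) (Fin M) ℝ => A ρ σ)
      (LagAux.partialSum M α hα1 hα0 N)
    simp only [Matrix.sum_apply, Matrix.vecMulVec_apply, Matrix.sub_apply, Matrix.one_apply,
      Matrix.mul_apply, Matrix.transpose_apply] at this
    exact this
  have h2 : Tendsto (fun N => ∑ i ∈ Finset.range N, Lag M α i ρ * Lag M α i σ) atTop
      (nhds ((if ρ = σ then 1 else 0) - 0)) := by
    simp only [hps]
    apply Tendsto.sub tendsto_const_nhds
    rw [show (0:ℝ) = ∑ _k : Fin M, (0:ℝ) by simp]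
    apply tendsto_finset_sum
    intro k _
    apply squeeze_zero_norm (a := fun N => C * C * (q * q) ^ N)
    · intro N
      rw [Real.norm_eq_abs, abs_mul, mul_pow]
      calc |((AL M α) ^ N) ρ k| * |((AL M α) ^ N) σ k|
          ≤ (C * q ^ N) * (C * q ^ N) :=
            mul_le_mul (hbound N ρ k) (hbound N σ k) (abs_nonneg _) (by positivity)
        _ = C * C * (q ^ N * q ^ N) := by ring
    · have := (tendsto_pow_atTop_nhds_zero_of_lt_one (by positivity) hqq).const_mul (C * C)
      simpa using this
  rw [sub_zero] at h2
  exact tendsto_nhds_unique h1 h2
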